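/- Let H be a Hilbert space and let e_1, ..., e_K be orthogonal projections on H with e_1 + ... + e_K = 1. Then for every positive (bounded, self-adjoint, positive semidefinite) operator x on H, x ≤ K · ∑_{j=1}^K e_j x e_j in the operator order (i.e., for every vector h, ⟨h, x h⟩ ≤ K ∑_j ⟨h, e_j x e_j h⟩). -/

import Mathlib

open scoped InnerProductSpace

/-- Pinching inequality: if `e 1, ..., e K` are orthogonal projections on a complex Hilbert
space summing to the identity, then every positive operator `x` satisfies
`x ≤ K · ∑ j, e j x e j` in the sense of quadratic forms. -/
theorem pinching_cp_index {H : Type*} [NormedAddCommGroup H] [InnerProductSpace ℂ H]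
    [CompleteSpace H] (K : ℕ) (e : Fin K → (H →L[ℂ] H))
    (hproj : ∀ j, IsSelfAdjoint (e j) ∧ (e j) ∘L (e j) = e j)
    (hsum : ∑ j, e j = 1)
    (x : H →L[ℂ] H) (hx : x.IsPositive) :
    ∀ h : H, (⟪h, x h⟫_ℂ).re ≤ (K : ℝ) * ∑ j, (⟪h, (e j) (x ((e j) h))⟫_ℂ).re := by
  intro h
  have hxadj : ∀ u v : H, ⟪x u, v⟫_ℂ = ⟪u, x v⟫_ℂ := fun u v => hx.1 u v
  -- generalized Cauchy-Schwarz style bound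
  have key : ∀ u v : H, 2 * (⟪u, x v⟫_ℂ).re ≤ (⟪u, x u⟫_ℂ).re + (⟪v, x v⟫_ℂ).re := by
    intro u v
    have h0 : 0 ≤ (⟪x (u - v), u - v⟫_ℂ).re := hx.2 (u - v)
    have hexp : ⟪x (u - v), u - v⟫_ℂ
        = ⟪u, x u⟫_ℂ - ⟪u, x v⟫_ℂ - (starRingEnd ℂ) ⟪u, x v⟫_ℂ + ⟪v, x v⟫_ℂ := by
      rw [map_sub, inner_sub_left, inner_sub_right, inner_sub_right,
        hxadj u u, hxadj u v, hxadj v v, ← inner_conj_symm (x v) u]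
      ring
    rw [hexp] at h0
    simp only [Complex.add_re, Complex.sub_re, Complex.conj_re] at h0
    linarith
  -- rewrite the RHS terms
  have hrhs : ∀ j, ⟪h, (e j) (x ((e j) h))⟫_ℂ = ⟪(e j) h, x ((e j) h)⟫_ℂ := by
    intro j
    exact ((hproj j).1.isSymmetric h (x ((e j) h))).symm
  -- expand h = ∑ e j h
  have hdecomp : h = ∑ j, (e j) h := by
    have := congrArg (fun T : H →L[ℂ] H => T h) hsum
    simpa using this.symm
  have hexpand : ⟪h, x h⟫_ℂ = ∑ j, ∑ k, ⟪(e j) h, x ((e k) h)⟫_ℂ := by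
    conv_lhs => rw [hdecomp]
    rw [map_sum, sum_inner]
    congr 1
    ext j
    exact inner_sum _ _ _
  have hre : (⟪h, x h⟫_ℂ).re = ∑ j, ∑ k, (⟪(e j) h, x ((e k) h)⟫_ℂ).re := by
    rw [hexpand, Complex.re_sum]
    exact Finset.sum_congr rfl fun j _ => Complex.re_sum _ _
  set a : Fin K → ℝ := fun j => (⟪(e j) h, x ((e j) h)⟫_ℂ).re with ha
  have hbound : (2:ℝ) * (⟪h, x h⟫_ℂ).re ≤ 2 * (K : ℝ) * ∑ j, a j := by
    rw [hre, Finset.mul_sum]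
    have : ∀ j ∈ Finset.univ, 2 * ∑ k, (⟪(e j) h, x ((e k) h)⟫_ℂ).re
        ≤ ∑ k : Fin K, (a j + a k) := by
      intro j _
      rw [Finset.mul_sum]
      exact Finset.sum_le_sum fun k _ => key _ _
    calc ∑ j, 2 * ∑ k, (⟪(e j) h, x ((e k) h)⟫_ℂ).re
        ≤ ∑ j, ∑ k : Fin K, (a j + a k) := Finset.sum_le_sum this
      _ = 2 * (K : ℝ) * ∑ j, a j := by
          have hstep : ∀ j : Fin K, ∑ k : Fin K, (a j + a k) = (K : ℝ) * a j + ∑ k, a k := by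
            intro j
            rw [Finset.sum_add_distrib, Finset.sum_const, Finset.card_univ, Fintype.card_fin,
              nsmul_eq_mul]
          rw [Finset.sum_congr rfl fun j _ => hstep j, Finset.sum_add_distrib, ← Finset.mul_sum,
            Finset.sum_const, Finset.card_univ, Fintype.card_fin, nsmul_eq_mul]
          ring
  have : (K : ℝ) * ∑ j, (⟪h, (e j) (x ((e j) h))⟫_ℂ).re = (K : ℝ) * ∑ j, a j := by
    congr 1
    exact Finset.sum_congr rfl fun j _ => by rw [hrhs j]
  rw [this]
  linarith
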